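/- Let ℂ have the Euclidean metric and define x_n = n e^{i log n} for n ≥ 1 (x_0 = 0). Then |x_{n+1} - x_n| is bounded (in particular o(n)) and |x_n| = n, so the sequence escapes linearly to infinity with rate of escape 1, but the sequence is not escorted by any geodesic: there is no ray α(t) = t u (|u| = 1) with |x_n - α(|x_n|)| = o(n). -/

import Mathlib

open Filter

/-- The sequence `x_n = n e^{i log n}` in `ℂ` (with `x_0 = 0`). -/
noncomputable def xseq (n : ℕ) : ℂ :=
  (n : ℂ) * Complex.exp (Complex.I * Real.log n)

lemma norm_exp_I_mul (r : ℝ) : ‖Complex.exp (Complex.I * r)‖ = 1 := by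
  rw [Complex.norm_exp]
  simp [Complex.mul_re]

lemma norm_xseq (n : ℕ) : ‖xseq n‖ = n := by
  rw [xseq, norm_mul, norm_exp_I_mul, Complex.norm_natCast, mul_one]

lemma step_bound (n : ℕ) : ‖xseq (n + 1) - xseq n‖ ≤ 5 := by
  rcases Nat.eq_zero_or_pos n with h | h
  · subst h; norm_num [xseq, norm_exp_I_mul]
  · have hn : (0:ℝ) < n := by exact_mod_cast h
    set a : ℝ := Real.log n with ha
    set b : ℝ := Real.log (n+1) with hb
    have key : xseq (n+1) - xseq n
        = ((n:ℂ)+1) * (Complex.exp (Complex.I * b) - Complex.exp (Complex.I * a))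
          + Complex.exp (Complex.I * a) := by
      simp only [xseq, ha, hb]; push_cast; ring
    have hd : b - a = Real.log ((n+1)/n) := by
      rw [Real.log_div (by positivity) (by positivity)]
    have hdpos : 0 ≤ b - a := by
      rw [hd]; apply Real.log_nonneg; rw [le_div_iff₀ hn]; linarith
    have hdle : b - a ≤ 1 / n := by
      rw [hd]
      have := Real.log_le_sub_one_of_pos (show (0:ℝ) < (n+1)/n by positivity)
      calc Real.log ((n+1)/n) ≤ (n+1)/n - 1 := this
        _ = 1 / n := by field_simp; ring
    have hdle1 : b - a ≤ 1 := hdle.trans (by rw [div_le_one hn]; exact_mod_cast h)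
    have hexp : ‖Complex.exp (Complex.I * b) - Complex.exp (Complex.I * a)‖ ≤ 2 * (b - a) := by
      have heq : Complex.exp (Complex.I * b) - Complex.exp (Complex.I * a)
          = Complex.exp (Complex.I * a) * (Complex.exp (Complex.I * ((b:ℂ) - a)) - 1) := by
        rw [mul_sub, ← Complex.exp_add]; ring_nf
      rw [heq, norm_mul, norm_exp_I_mul, one_mul]
      have habs : ‖Complex.I * ((b:ℂ) - a)‖ = b - a := by
        rw [norm_mul, Complex.norm_I, one_mul,
          show ((b:ℂ) - a) = ((b - a : ℝ) : ℂ) by push_cast; ring,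
          Complex.norm_real, Real.norm_of_nonneg hdpos]
      have := Complex.norm_exp_sub_one_le (x := Complex.I * ((b:ℂ) - a)) (by rw [habs]; exact hdle1)
      rwa [habs] at this
    have hnorm : ‖((n:ℂ)+1)‖ = (n:ℝ)+1 := by
      rw [show ((n:ℂ)+1) = ((n+1:ℕ):ℂ) by push_cast; ring, Complex.norm_natCast]
      push_cast; ring
    calc ‖xseq (n+1) - xseq n‖
        ≤ ‖((n:ℂ)+1) * (Complex.exp (Complex.I * b) - Complex.exp (Complex.I * a))‖
          + ‖Complex.exp (Complex.I * a)‖ := by rw [key]; exact norm_add_le _ _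
      _ = ((n:ℝ)+1) * ‖Complex.exp (Complex.I * b) - Complex.exp (Complex.I * a)‖ + 1 := by
          rw [norm_mul, hnorm, norm_exp_I_mul]
      _ ≤ ((n:ℝ)+1) * (2 * (1/n)) + 1 := by
          apply add_le_add_left
          exact mul_le_mul_of_nonneg_left (hexp.trans (by linarith)) (by positivity)
      _ ≤ 5 := by
          have h1 : (1:ℝ) ≤ n := by exact_mod_cast h
          have h2 : (1:ℝ)/n ≤ 1 := by rw [div_le_one hn]; exact h1
          have h3 : (1/(n:ℝ))*(n:ℝ) = 1 := one_div_mul_cancel hn.ne'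
          nlinarith [h2, h3]

lemma part3 : Tendsto (fun n : ℕ => ‖xseq n‖ / n) atTop (nhds 1) := by
  have : ∀ᶠ n : ℕ in atTop, ‖xseq n‖ / n = 1 := by
    filter_upwards [eventually_ge_atTop 1] with n hn
    rw [norm_xseq, div_self (by exact_mod_cast Nat.one_le_iff_ne_zero.mp hn)]
  exact tendsto_const_nhds.congr' (this.mono fun n h => h.symm)

lemma part4 : ¬ ∃ u : ℂ, ‖u‖ = 1 ∧
    Tendsto (fun n : ℕ => ‖xseq n - (‖xseq n‖ : ℂ) * u‖ / n) atTop (nhds 0) := by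
  rintro ⟨u, hu, ht⟩
  set f : ℕ → ℂ := fun n => Complex.exp (Complex.I * Real.log n) with hf
  have hfu : Tendsto f atTop (nhds u) := by
    rw [tendsto_iff_norm_sub_tendsto_zero]
    apply ht.congr'
    filter_upwards [eventually_ge_atTop 1] with n hn
    have hn0 : (0:ℝ) < n := by exact_mod_cast hn
    rw [norm_xseq]
    have heq : xseq n - (((n:ℕ):ℝ):ℂ) * u = (((n:ℕ):ℝ):ℂ) * (f n - u) := by
      simp only [xseq, hf, Complex.ofReal_natCast]; ring
    rw [heq, norm_mul, Complex.norm_real, Real.norm_of_nonneg hn0.le,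
      mul_comm, mul_div_assoc, div_self hn0.ne', mul_one]
  have h2n : Tendsto (fun n : ℕ => 2 * n) atTop atTop :=
    tendsto_atTop_atTop.2 fun b => ⟨b, fun n hn => by omega⟩
  have h1 : Tendsto (fun n : ℕ => f (2 * n)) atTop (nhds u) := hfu.comp h2n
  have h2 : Tendsto (fun n : ℕ => f (2 * n)) atTop
      (nhds (Complex.exp (Complex.I * Real.log 2) * u)) := by
    apply Tendsto.congr' _ (hfu.const_mul (Complex.exp (Complex.I * Real.log 2)))
    filter_upwards [eventually_ge_atTop 1] with n hn
    have hn0 : (0:ℝ) < n := by exact_mod_cast hn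
    simp only [hf]
    rw [← Complex.exp_add, ← mul_add, show ((2*n : ℕ):ℝ) = 2 * (n:ℝ) by push_cast; ring,
      Real.log_mul (by norm_num) hn0.ne']
    push_cast; ring_nf
  have hequ : Complex.exp (Complex.I * Real.log 2) * u = u := tendsto_nhds_unique h2 h1
  have hune : u ≠ 0 := by intro h0; rw [h0] at hu; simp at hu
  have hone : Complex.exp (Complex.I * Real.log 2) = 1 := by
    have := mul_right_cancel₀ hune (hequ.trans (one_mul u).symm)
    exact this
  rw [Complex.exp_eq_one_iff] at hone
  obtain ⟨k, hk⟩ := hone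
  have him : Real.log 2 = k * (2 * Real.pi) := by
    have h' : (Real.log 2 : ℂ) = (k:ℂ) * (2 * Real.pi) :=
      mul_left_cancel₀ Complex.I_ne_zero (hk.trans (by ring))
    exact_mod_cast h'
  have hlog2 : 0 < Real.log 2 := Real.log_pos (by norm_num)
  have hlog2' : Real.log 2 < 1 := by
    have := Real.log_two_lt_d9
    linarith
  have hpi : (3:ℝ) < Real.pi := Real.pi_gt_three
  have hk1 : (1:ℝ) ≤ k := by
    by_contra hlt
    push_neg at hlt
    have : (k:ℝ) ≤ 0 := by exact_mod_cast Int.lt_add_one_iff.mp (by exact_mod_cast hlt)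
    nlinarith
  nlinarith

/-- The sequence `x_n = n e^{i log n}` has bounded steps and `|x_n| = n`, so it escapes
linearly to infinity with rate of escape 1, yet it is not escorted by any geodesic ray
`t ↦ t u` from the origin. -/
theorem stmt18 :
    (∃ C : ℝ, ∀ n : ℕ, ‖xseq (n + 1) - xseq n‖ ≤ C) ∧
    (∀ n : ℕ, ‖xseq n‖ = n) ∧
    Tendsto (fun n : ℕ => ‖xseq n‖ / n) atTop (nhds 1) ∧
    ¬ ∃ u : ℂ, ‖u‖ = 1 ∧
      Tendsto (fun n : ℕ => ‖xseq n - (‖xseq n‖ : ℂ) * u‖ / n) atTop (nhds 0) :=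
  ⟨⟨5, step_bound⟩, norm_xseq, part3, part4⟩
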